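/- Let D ≥ 3 be an integer, let x > 0 be real, and set T(w) = (1 − √(1 − 4w))/(2w). Then there exist constants C > 0 and N₀ such that for all real N ≥ N₀ (in particular N large enough that 0 < 1/(4D) − x·N^{2−D}), |T(D·(1/(4D) − x·N^{2−D})) − (2 − 4·√(D·x)·N^{1−D/2})| ≤ C·N^{2−D}. -/

import Mathlib

/-- Closed form of the plane-tree generating function. -/
noncomputable def Tgf (w : ℝ) : ℝ := (1 - Real.sqrt (1 - 4 * w)) / (2 * w)

/-- Expansion of the melonic two-point function at the rescaled coupling
`z = 1/(4D) - x·N^{2-D}`: for `D ≥ 3` and `x > 0`,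
`T(Dz) = 2 - 4√(Dx)·N^{1-D/2} + O(N^{2-D})`. -/
theorem melonic_double_scaling_expansion (D : ℕ) (hD : 3 ≤ D) (x : ℝ) (hx : 0 < x) :
    ∃ C > (0 : ℝ), ∃ N₀ : ℝ, ∀ N : ℝ, N₀ ≤ N →
      0 < 1 / (4 * (D : ℝ)) - x * N ^ ((2 : ℝ) - (D : ℝ)) ∧
      |Tgf ((D : ℝ) * (1 / (4 * (D : ℝ)) - x * N ^ ((2 : ℝ) - (D : ℝ)))) -
          (2 - 4 * Real.sqrt ((D : ℝ) * x) * N ^ (1 - (D : ℝ) / 2))|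
        ≤ C * N ^ ((2 : ℝ) - (D : ℝ)) := by
  have hD0 : (0:ℝ) < D := by exact_mod_cast Nat.lt_of_lt_of_le (by norm_num) hD
  refine ⟨8 * D * x, by positivity, max 1 (4 * D * x + 1), fun N hN => ?_⟩
  have hN1 : (1:ℝ) ≤ N := le_trans (le_max_left _ _) hN
  have hN0 : (0:ℝ) < N := lt_of_lt_of_le one_pos hN1
  set ε : ℝ := x * N ^ ((2:ℝ) - (D:ℝ)) with hεdef
  have hε : 0 < ε := by positivity
  -- key bound: 4 D ε < 1
  have hP : (0:ℝ) < N ^ ((D:ℝ) - 2) := Real.rpow_pos_of_pos hN0 _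
  have hpow : N ^ ((2:ℝ) - (D:ℝ)) = (N ^ ((D:ℝ) - 2))⁻¹ := by
    rw [show (2:ℝ) - (D:ℝ) = -((D:ℝ) - 2) by ring, Real.rpow_neg hN0.le]
  have hND : 4 * (D:ℝ) * x < N ^ ((D:ℝ) - 2) := by
    have h1 : 4 * (D:ℝ) * x < N := by
      have := le_trans (le_max_right (1:ℝ) (4 * D * x + 1)) hN
      linarith
    have h2 : N ≤ N ^ ((D:ℝ) - 2) := by
      calc N = N ^ (1:ℝ) := (Real.rpow_one N).symm
        _ ≤ N ^ ((D:ℝ) - 2) := by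
          apply Real.rpow_le_rpow_of_exponent_le hN1
          have : (3:ℝ) ≤ (D:ℝ) := by exact_mod_cast hD
          linarith
    linarith
  have h4 : 4 * (D:ℝ) * ε < 1 := by
    have : 4 * (D:ℝ) * ε = (4 * (D:ℝ) * x) * (N ^ ((D:ℝ) - 2))⁻¹ := by
      rw [hεdef, hpow]; ring
    rw [this]
    have := mul_lt_mul_of_pos_right hND (inv_pos.2 hP)
    rwa [mul_inv_cancel₀ hP.ne'] at this
  have hpos : 0 < 1 / (4 * (D:ℝ)) - ε := by
    rw [sub_pos, lt_div_iff₀ (by linarith)]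
    linarith
  refine ⟨hpos, ?_⟩
  set u : ℝ := Real.sqrt ((D:ℝ) * ε) with hudef
  have hu0 : 0 < u := Real.sqrt_pos.2 (by positivity)
  have hu2 : u ^ 2 = (D:ℝ) * ε := Real.sq_sqrt (by positivity)
  have hu1 : 2 * u < 1 := by nlinarith [sq_nonneg (2 * u - 1)]
  -- compute Tgf
  have hw1 : 1 - 4 * ((D:ℝ) * (1 / (4 * (D:ℝ)) - ε)) = (2 * u) ^ 2 := by
    field_simp
    nlinarith [hu2]
  have hsq : Real.sqrt (1 - 4 * ((D:ℝ) * (1 / (4 * (D:ℝ)) - ε))) = 2 * u := by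
    rw [hw1, Real.sqrt_sq (by positivity)]
  have hden : 2 * ((D:ℝ) * (1 / (4 * (D:ℝ)) - ε)) = (1 - 2 * u) * (1 + 2 * u) / 2 := by
    field_simp
    nlinarith [hu2]
  have hne1 : (1:ℝ) - 2 * u ≠ 0 := by linarith
  have hne2 : (1:ℝ) + 2 * u ≠ 0 := by linarith
  have hT : Tgf ((D:ℝ) * (1 / (4 * (D:ℝ)) - ε)) = 2 / (1 + 2 * u) := by
    rw [Tgf, hsq, hden]
    field_simp
  -- identify the sqrt term
  have hterm : Real.sqrt ((D:ℝ) * x) * N ^ (1 - (D:ℝ) / 2) = u := by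
    have hsr : Real.sqrt (N ^ ((2:ℝ) - (D:ℝ))) = N ^ (1 - (D:ℝ) / 2) := by
      rw [Real.sqrt_eq_rpow, ← Real.rpow_mul hN0.le,
        show ((2:ℝ) - (D:ℝ)) * (1/2) = 1 - (D:ℝ) / 2 by ring]
    rw [hudef, hεdef, show (D:ℝ) * (x * N ^ ((2:ℝ) - (D:ℝ))) = ((D:ℝ) * x) * N ^ ((2:ℝ) - (D:ℝ)) by ring,
      Real.sqrt_mul (by positivity : (0:ℝ) ≤ (D:ℝ) * x), hsr]
  rw [hT, show 2 - 4 * Real.sqrt ((D:ℝ) * x) * N ^ (1 - (D:ℝ) / 2) = 2 - 4 * u by rw [mul_assoc, hterm]]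
  have key : 2 / (1 + 2 * u) - (2 - 4 * u) = 8 * u ^ 2 / (1 + 2 * u) := by
    field_simp
    ring
  rw [key, abs_of_nonneg (by positivity)]
  have hle : 8 * u ^ 2 / (1 + 2 * u) ≤ 8 * u ^ 2 :=
    div_le_self (by positivity) (by linarith)
  have : 8 * (D:ℝ) * x * N ^ ((2:ℝ) - (D:ℝ)) = 8 * u ^ 2 := by
    rw [hu2, hεdef]; ring
  linarith
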